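/- Assume K ⊆ L satisfy conditions (L0)–(L2). If U and V are both K-generic objects in L, then U and V are isomorphic in L. -/

import Mathlib

open CategoryTheory CategoryTheory.Limits

universe v u

variable {L : Type u} [Category.{v} L]

/-- A subcategory of `L`. -/
structure Subcat (L : Type u) [Category.{v} L] where
  objs : Set L
  homs : ∀ a b : L, Set (a ⟶ b)
  src_mem : ∀ {a b : L} {f : a ⟶ b}, f ∈ homs a b → a ∈ objs
  tgt_mem : ∀ {a b : L} {f : a ⟶ b}, f ∈ homs a b → b ∈ objs
  id_mem : ∀ a ∈ objs, 𝟙 a ∈ homs a a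
  comp_mem : ∀ {a b c : L} {f : a ⟶ b} {g : b ⟶ c},
      f ∈ homs a b → g ∈ homs b c → f ≫ g ∈ homs a c

/-- A countable subcategory. -/
def Subcat.IsCountable (S : Subcat L) : Prop :=
  S.objs.Countable ∧ ∀ a b : L, (S.homs a b).Countable

/-- A sequence in the full subcategory `K` of `L`. -/
def SeqIn (K : Set L) (u : ℕ ⥤ L) : Prop := ∀ n : ℕ, u.obj n ∈ K

/-- (L0): all `L`-arrows are monic. -/
def CondL0 (L : Type u) [Category.{v} L] : Prop := ∀ ⦃X Y : L⦄ (f : X ⟶ Y), Mono f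

/-- (L1): every sequence in `K` has a colimit in `L`, and every `L`-object is the
colimit of a sequence in `K`. -/
def CondL1 (K : Set L) : Prop :=
  (∀ u : ℕ ⥤ L, SeqIn K u → ∃ c : Cocone u, Nonempty (IsColimit c)) ∧
  (∀ X : L, ∃ u : ℕ ⥤ L, SeqIn K u ∧ ∃ c : Cocone u, c.pt = X ∧ Nonempty (IsColimit c))

/-- (L2): every `K`-object is `ω`-small in `L` (for sequences in `K`). -/
def CondL2 (K : Set L) : Prop :=
  ∀ a ∈ K, ∀ u : ℕ ⥤ L, SeqIn K u → ∀ c : Cocone u, IsColimit c →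
    ∀ f : a ⟶ c.pt, ∃ (n : ℕ) (f' : a ⟶ u.obj n), f' ≫ c.ι.app n = f

/-- `U` is weakly `K`-injective. -/
def WeaklyInjective (K : Set L) (U : L) : Prop :=
  ∀ a ∈ K, ∀ e : a ⟶ U, ∃ b ∈ K, ∃ i : a ⟶ b,
    ∀ y ∈ K, ∀ f : b ⟶ y, ∃ g : y ⟶ U, i ≫ f ≫ g = e

/-- `U` is `K`-generic: every `K`-object admits an arrow into `U`, and `U` is
weakly `K`-injective. -/
def IsGeneric (K : Set L) (U : L) : Prop :=
  (∀ x ∈ K, Nonempty (x ⟶ U)) ∧ WeaklyInjective K U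

/-- A weak Fraïssé sequence in the full subcategory `K` of `L`: (G1) and (G2)
relative to `K`. -/
def IsWeakFraisseSeqIn (K : Set L) (u : ℕ ⥤ L) : Prop :=
  (∀ x ∈ K, ∃ n : ℕ, Nonempty (x ⟶ u.obj n)) ∧
  (∀ n : ℕ, ∃ (m : ℕ) (hnm : n ≤ m), ∀ y ∈ K, ∀ f : u.obj m ⟶ y,
    ∃ (k : ℕ) (hmk : m ≤ k) (g : y ⟶ u.obj k),
      u.map (homOfLE hnm) ≫ f ≫ g = u.map (homOfLE (hnm.trans hmk)))

/-- The full subcategory `K` is directed. -/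
def DirectedIn (K : Set L) : Prop :=
  ∀ x ∈ K, ∀ y ∈ K, ∃ z ∈ K, Nonempty (x ⟶ z) ∧ Nonempty (y ⟶ z)

/-- An arrow between `K`-objects that is amalgamable in the full subcategory `K`. -/
def AmalgamableIn (K : Set L) {z z' : L} (e : z ⟶ z') : Prop :=
  ∀ x ∈ K, ∀ y ∈ K, ∀ (f : z' ⟶ x) (g : z' ⟶ y),
    ∃ w ∈ K, ∃ (f' : x ⟶ w) (g' : y ⟶ w), e ≫ f ≫ f' = e ≫ g ≫ g'

/-- The full subcategory `K` has the weak amalgamation property. -/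
def HasWAPIn (K : Set L) : Prop :=
  ∀ z ∈ K, ∃ z' ∈ K, ∃ e : z ⟶ z', AmalgamableIn K e

/-- `S` is a weakly dominating subcategory of the full subcategory `K`. -/
def WeaklyDominatingIn (K : Set L) (S : Subcat L) : Prop :=
  S.objs ⊆ K ∧
  (∀ x ∈ K, ∃ y ∈ S.objs, Nonempty (x ⟶ y)) ∧
  (∀ y ∈ S.objs, ∃ (y' : L) (j : y ⟶ y'), j ∈ S.homs y y' ∧
    ∀ z ∈ K, ∀ f : y' ⟶ z, ∃ w ∈ K, ∃ g : z ⟶ w, j ≫ f ≫ g ∈ S.homs y w)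

/-- The full subcategory `K` is a weak Fraïssé category: directed, WAP, and weakly
dominated by a countable subcategory. -/
def IsWeakFraisseCatIn (K : Set L) : Prop :=
  DirectedIn K ∧ HasWAPIn K ∧
    ∃ S : Subcat L, S.IsCountable ∧ WeaklyDominatingIn K S

section AuxUnique

/-- Factorization through the sequence with a lower bound on the index. -/
lemma factor_ge (K : Set L) (h2 : CondL2 K) {u : ℕ ⥤ L} (hu : SeqIn K u)
    {c : Cocone u} (hc : IsColimit c) {a : L} (ha : a ∈ K) (f : a ⟶ c.pt) (n₀ : ℕ) :
    ∃ (n : ℕ) (_ : n₀ ≤ n) (f' : a ⟶ u.obj n), f' ≫ c.ι.app n = f := by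
  obtain ⟨p, f', hf⟩ := h2 a ha u hu c hc f
  exact ⟨max n₀ p, le_max_left _ _, f' ≫ u.map (homOfLE (le_max_right n₀ p)),
    by rw [Category.assoc, c.w]; exact hf⟩

/-- `m` is a "good" index over `n` for the sequence `w`. -/
def GoodAt (K : Set L) (w : ℕ ⥤ L) (n m : ℕ) (h : n ≤ m) : Prop :=
  ∀ y ∈ K, ∀ f : w.obj m ⟶ y, ∃ (k : ℕ) (hk : m ≤ k) (g : y ⟶ w.obj k),
    w.map (homOfLE h) ≫ f ≫ g = w.map (homOfLE (h.trans hk))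

lemma exists_goodAt (K : Set L) (h0 : CondL0 L) (h2 : CondL2 K) {u : ℕ ⥤ L}
    (hu : SeqIn K u) {c : Cocone u} (hc : IsColimit c)
    (hWI : WeaklyInjective K c.pt) (n n₁ : ℕ) :
    ∃ (m : ℕ) (hm : n ≤ m), n₁ ≤ m ∧ GoodAt K u n m hm := by
  obtain ⟨b, hb, i, hext⟩ := hWI (u.obj n) (hu n) (c.ι.app n)
  obtain ⟨g0, hg0⟩ := hext b hb (𝟙 b)
  rw [Category.id_comp] at hg0
  obtain ⟨m, hm, t, ht⟩ := factor_ge K h2 hu hc hb g0 (max n n₁)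
  have hnm : n ≤ m := le_trans (le_max_left _ _) hm
  haveI : Mono (c.ι.app m) := h0 _
  have key : i ≫ t = u.map (homOfLE hnm) := by
    apply (cancel_mono (c.ι.app m)).1
    rw [Category.assoc, ht, hg0, c.w]
  refine ⟨m, hnm, le_trans (le_max_right _ _) hm, ?_⟩
  intro y hy f
  obtain ⟨g2, hg2⟩ := hext y hy (t ≫ f)
  obtain ⟨q, hq, s, hs⟩ := factor_ge K h2 hu hc hy g2 m
  haveI : Mono (c.ι.app q) := h0 _
  refine ⟨q, hq, s, (cancel_mono (c.ι.app q)).1 ?_⟩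
  calc (u.map (homOfLE hnm) ≫ f ≫ s) ≫ c.ι.app q
      = i ≫ (t ≫ f) ≫ (s ≫ c.ι.app q) := by
        rw [← key]; simp [Category.assoc]
    _ = c.ι.app n := by rw [hs]; exact hg2
    _ = u.map (homOfLE (hnm.trans hq)) ≫ c.ι.app q := (c.w (homOfLE (hnm.trans hq))).symm

/-- A state of the back-and-forth construction between two sequences. -/
structure BF (K : Set L) (u v : ℕ ⥤ L) where
  a : ℕ
  a' : ℕ
  b : ℕ
  b' : ℕ
  a₂ : ℕ
  h1 : a ≤ a'
  h2 : b ≤ b'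
  h3 : a' ≤ a₂
  f : u.obj a' ⟶ v.obj b
  g : v.obj b' ⟶ u.obj a₂
  r1 : u.map (homOfLE h1) ≫ f ≫ v.map (homOfLE h2) ≫ g = u.map (homOfLE (h1.trans h3))
  good : GoodAt K v b b' h2
  haa : a < a'
  hbb : b < b'

/-- Linking condition between consecutive back-and-forth states. -/
def BFLink (K : Set L) (u v : ℕ ⥤ L) (s t : BF K u v) : Prop :=
  ∃ (hb : s.b' ≤ t.b) (ha : s.a₂ ≤ t.a') (_ : s.a₂ ≤ t.a),
    (v.map (homOfLE s.h2) ≫ s.g ≫ u.map (homOfLE ha) ≫ t.f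
        = v.map (homOfLE (s.h2.trans hb))) ∧
    (u.map (homOfLE ha) ≫ t.f ≫ v.map (homOfLE t.h2) ≫ t.g
        = u.map (homOfLE (ha.trans t.h3)))

lemma bf_step (K : Set L) {u v : ℕ ⥤ L} (hu : SeqIn K u) (hv : SeqIn K v)
    (hgu : ∀ n n₁ : ℕ, ∃ (m : ℕ) (hm : n ≤ m), n₁ ≤ m ∧ GoodAt K u n m hm)
    (hgv : ∀ n n₁ : ℕ, ∃ (m : ℕ) (hm : n ≤ m), n₁ ≤ m ∧ GoodAt K v n m hm)
    (s : BF K u v) : ∃ t : BF K u v, BFLink K u v s t := by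
  obtain ⟨a'', ha2, ha2', gooda⟩ := hgu s.a₂ (s.a₂ + 1)
  obtain ⟨l, hl, fnew, hR2⟩ := s.good (u.obj a'') (hu a'') (s.g ≫ u.map (homOfLE ha2))
  obtain ⟨b'', hlb, hlb', goodb⟩ := hgv l (l + 1)
  obtain ⟨k, hk, gnew, hR1⟩ := gooda (v.obj b'') (hv b'') (fnew ≫ v.map (homOfLE hlb))
  rw [Category.assoc] at hR1
  rw [Category.assoc] at hR2
  exact ⟨⟨s.a₂, a'', l, b'', k, ha2, hlb, hk, fnew, gnew, hR1, goodb,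
    Nat.lt_of_lt_of_le (Nat.lt_succ_self s.a₂) ha2',
    Nat.lt_of_lt_of_le (Nat.lt_succ_self l) hlb'⟩,
    hl, ha2, le_refl s.a₂, hR2, hR1⟩

/-- Building a cocone over a sequence from successive compatibilities. -/
lemma coconeOfSeq_key (F : ℕ ⥤ L) {X : L} (app : ∀ n, F.obj n ⟶ X)
    (w : ∀ n, F.map (homOfLE (Nat.le_succ n)) ≫ app (n + 1) = app n) :
    ∀ (i j : ℕ) (h : i ≤ j), F.map (homOfLE h) ≫ app j = app i := by
  intro i j h
  induction j, h using Nat.le_induction with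
  | base =>
      rw [show (homOfLE (le_refl i) : i ⟶ i) = 𝟙 i from rfl, F.map_id, Category.id_comp]
  | succ j hij ih =>
      rw [show (homOfLE _ : i ⟶ (j+1)) = homOfLE hij ≫ homOfLE (Nat.le_succ j) from rfl,
        F.map_comp, Category.assoc, w j, ih]

/-- The cocone over a sequence determined by successively compatible maps. -/
def coconeOfSeq (F : ℕ ⥤ L) (X : L) (app : ∀ n, F.obj n ⟶ X)
    (w : ∀ n, F.map (homOfLE (Nat.le_succ n)) ≫ app (n + 1) = app n) : Cocone F where
  pt := X
  ι :=
    { app := app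
      naturality := fun i j h => by
        dsimp
        rw [Category.comp_id]
        exact coconeOfSeq_key F app w i j (leOfHom h) }

/-- Restriction of a cocone to a monotone subsequence. -/
def subCocone {w : ℕ ⥤ L} (c : Cocone w) {A : ℕ → ℕ} (hA : Monotone A) :
    Cocone (hA.functor ⋙ w) where
  pt := c.pt
  ι :=
    { app := fun k => c.ι.app (A k)
      naturality := fun i j h => by
        dsimp
        rw [Category.comp_id]
        exact c.w _ }

/-- Extending a cocone on a dominating subsequence to the whole sequence. -/
def extendCocone {w : ℕ ⥤ L} {A : ℕ → ℕ} (hA : Monotone A) (hge : ∀ k, k ≤ A k)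
    (s : Cocone (hA.functor ⋙ w)) : Cocone w :=
  coconeOfSeq w s.pt (fun j => w.map (homOfLE (hge j)) ≫ s.ι.app j) (by
    intro j
    have hs := s.w (homOfLE (Nat.le_succ j))
    dsimp at hs ⊢
    rw [← hs]
    refine (w.map_comp_assoc _ _ _).symm.trans ?_
    refine Eq.trans ?_ (w.map_comp_assoc _ _ _)
    rfl)

/-- A colimit cocone restricted to a dominating subsequence is still a colimit. -/
def subCoconeIsColimit {w : ℕ ⥤ L} {c : Cocone w} (hc : IsColimit c) {A : ℕ → ℕ}
    (hA : Monotone A) (hge : ∀ k, k ≤ A k) : IsColimit (subCocone c hA) where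
  desc s := hc.desc (extendCocone hA hge s)
  fac s k := by
    have h := hc.fac (extendCocone hA hge s) (A k)
    dsimp [subCocone]
    refine h.trans ?_
    dsimp [extendCocone, coconeOfSeq]
    have hs := s.w (homOfLE (hge k) : k ⟶ A k)
    dsimp at hs
    rw [← hs]
    rfl
  uniq s m hm := by
    refine hc.uniq (extendCocone hA hge s) m ?_
    intro j
    have h2 := hm j
    dsimp [subCocone] at h2
    dsimp [extendCocone, coconeOfSeq]
    rw [← c.w (homOfLE (hge j) : j ⟶ A j)]
    exact (Category.assoc _ _ _).trans (whisker_eq _ h2)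

end AuxUnique

/-- under (L0)–(L2), the `K`-generic object is unique up to
isomorphism. -/
theorem isGeneric_unique (K : Set L)
    (h0 : CondL0 L) (h1 : CondL1 K) (h2 : CondL2 K)
    (U V : L) (hU : IsGeneric K U) (hV : IsGeneric K V) :
    Nonempty (U ≅ V) := by
  obtain ⟨u, hu, cU, hptU, ⟨hcU⟩⟩ := h1.2 U
  obtain ⟨v, hv, cV, hptV, ⟨hcV⟩⟩ := h1.2 V
  subst hptU
  subst hptV
  have hgu : ∀ n n₁ : ℕ, ∃ (m : ℕ) (hm : n ≤ m), n₁ ≤ m ∧ GoodAt K u n m hm :=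
    fun n n₁ => exists_goodAt K h0 h2 hu hcU hU.2 n n₁
  have hgv : ∀ n n₁ : ℕ, ∃ (m : ℕ) (hm : n ≤ m), n₁ ≤ m ∧ GoodAt K v n m hm :=
    fun n n₁ => exists_goodAt K h0 h2 hv hcV hV.2 n n₁
  -- initial state
  obtain ⟨a', h0a, h1a, gooda⟩ := hgu 0 1
  obtain ⟨e⟩ := hV.1 (u.obj a') (hu a')
  obtain ⟨b0, f0, -⟩ := h2 (u.obj a') (hu a') v hv cV hcV e
  obtain ⟨b', hbb', hb1, goodb⟩ := hgv b0 (b0 + 1)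
  obtain ⟨a₂, ha2, g0, hr1⟩ := gooda (v.obj b') (hv b') (f0 ≫ v.map (homOfLE hbb'))
  rw [Category.assoc] at hr1
  let s₀ : BF K u v := ⟨0, a', b0, b', a₂, h0a, hbb', ha2, f0, g0, hr1, goodb,
    Nat.lt_of_lt_of_le Nat.zero_lt_one h1a,
    Nat.lt_of_lt_of_le (Nat.lt_succ_self b0) hb1⟩
  -- the chain of states
  choose stepFn hstep using bf_step K hu hv hgu hgv
  let S : ℕ → BF K u v := fun n => Nat.rec s₀ (fun _ s => stepFn s) n
  have hLink : ∀ k, BFLink K u v (S k) (S (k + 1)) := fun k => hstep (S k)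
  -- the subsequences
  have hAstep : ∀ k, (S k).a < (S (k + 1)).a := by
    intro k
    obtain ⟨hb, ha, hta, hR2, hR1⟩ := hLink k
    exact lt_of_lt_of_le (lt_of_lt_of_le (S k).haa (S k).h3) hta
  have hBstep : ∀ k, (S k).b < (S (k + 1)).b := by
    intro k
    obtain ⟨hb, ha, hta, hR2, hR1⟩ := hLink k
    exact lt_of_lt_of_le (S k).hbb hb
  have hAs : StrictMono (fun k => (S k).a) := strictMono_nat_of_lt_succ hAstep
  have hBs : StrictMono (fun k => (S k).b) := strictMono_nat_of_lt_succ hBstep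
  have hA : Monotone (fun k => (S k).a) := hAs.monotone
  have hB : Monotone (fun k => (S k).b) := hBs.monotone
  -- the two candidate cocones
  have hαcomp : ∀ k, (hA.functor ⋙ u).map (homOfLE (Nat.le_succ k)) ≫
      (u.map (homOfLE (S (k+1)).h1) ≫ (S (k+1)).f ≫ cV.ι.app (S (k+1)).b) =
      u.map (homOfLE (S k).h1) ≫ (S k).f ≫ cV.ι.app (S k).b := by
    intro k
    obtain ⟨hb, ha, hta, hR2, hR1⟩ := hLink k
    show u.map (homOfLE (hAstep k).le) ≫
      (u.map (homOfLE (S (k+1)).h1) ≫ (S (k+1)).f ≫ cV.ι.app (S (k+1)).b) = _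
    rw [← Category.assoc, ← u.map_comp]
    rw [show (homOfLE (hA (Nat.le_succ k)) ≫ homOfLE (S (k+1)).h1 :
          ((S k).a : ℕ) ⟶ (S (k+1)).a') =
        homOfLE ((S k).h1.trans (S k).h3) ≫ homOfLE ha from rfl]
    rw [u.map_comp, Category.assoc, ← (S k).r1]
    simp only [Category.assoc]
    rw [reassoc_of% hR2, cV.w (homOfLE ((S k).h2.trans hb))]
  have hβcomp : ∀ k, (hB.functor ⋙ v).map (homOfLE (Nat.le_succ k)) ≫
      (v.map (homOfLE (S (k+1)).h2) ≫ (S (k+1)).g ≫ cU.ι.app (S (k+1)).a₂) =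
      v.map (homOfLE (S k).h2) ≫ (S k).g ≫ cU.ι.app (S k).a₂ := by
    intro k
    obtain ⟨hb, ha, hta, hR2, hR1⟩ := hLink k
    show v.map (homOfLE (hBstep k).le) ≫
      (v.map (homOfLE (S (k+1)).h2) ≫ (S (k+1)).g ≫ cU.ι.app (S (k+1)).a₂) = _
    rw [← Category.assoc, ← v.map_comp]
    rw [show (homOfLE (hB (Nat.le_succ k)) ≫ homOfLE (S (k+1)).h2 :
          ((S k).b : ℕ) ⟶ (S (k+1)).b') =
        homOfLE ((S k).h2.trans hb) ≫ homOfLE (S (k+1)).h2 from rfl]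
    rw [v.map_comp, Category.assoc, ← hR2]
    simp only [Category.assoc]
    rw [reassoc_of% hR1, cU.w (homOfLE (ha.trans (S (k+1)).h3))]
  -- assemble the comparison maps
  let coconeα : Cocone (hA.functor ⋙ u) :=
    coconeOfSeq _ cV.pt
      (fun k => u.map (homOfLE (S k).h1) ≫ (S k).f ≫ cV.ι.app (S k).b) hαcomp
  let coconeβ : Cocone (hB.functor ⋙ v) :=
    coconeOfSeq _ cU.pt
      (fun k => v.map (homOfLE (S k).h2) ≫ (S k).g ≫ cU.ι.app (S k).a₂) hβcomp
  have subU := subCoconeIsColimit hcU hA (fun k => hAs.le_apply)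
  have subV := subCoconeIsColimit hcV hB (fun k => hBs.le_apply)
  let F : cU.pt ⟶ cV.pt := subU.desc coconeα
  let G : cV.pt ⟶ cU.pt := subV.desc coconeβ
  have hfacU : ∀ k, cU.ι.app ((S k).a) ≫ F
      = u.map (homOfLE (S k).h1) ≫ (S k).f ≫ cV.ι.app (S k).b :=
    fun k => subU.fac coconeα k
  have hfacV : ∀ k, cV.ι.app ((S k).b) ≫ G
      = v.map (homOfLE (S k).h2) ≫ (S k).g ≫ cU.ι.app (S k).a₂ :=
    fun k => subV.fac coconeβ k
  have hFG : F ≫ G = 𝟙 cU.pt := by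
    apply subU.hom_ext
    intro k
    dsimp [subCocone]
    simp only [Category.comp_id]
    rw [← Category.assoc, hfacU k]
    simp only [Category.assoc]
    rw [hfacV k, reassoc_of% (S k).r1, cU.w (homOfLE ((S k).h1.trans (S k).h3))]
  haveI : Mono G := h0 G
  have hGF : G ≫ F = 𝟙 cV.pt := by
    have hh : (G ≫ F) ≫ G = 𝟙 cV.pt ≫ G := by
      rw [Category.assoc, hFG]
      exact (Category.comp_id G).trans (Category.id_comp G).symm
    exact (cancel_mono G).1 hh
  exact ⟨⟨F, G, hFG, hGF⟩⟩
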